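/- For every composition s = (s(1),…,s(a)) with s(i) ≥ 2 for all i and every k ≥ 1, the number of s-Dyck paths with exactly k peaks (encoded by μ, the number of peaks is 1 + #{i ∈ [a−1] : μ(i) > 0}) equals the number of 312-avoiding Stirling (s−𝟏)-permutations with exactly k−1 ascents, where an ascent of a word w of length m is an index p ∈ [m−1] with w_p < w_{p+1}. -/

import Mathlib

/-- `μ` encodes an `s`-Dyck path: it has length `a = ℓ(s)`, sum `|s| - a`, and its
partial sums are bounded by those of `s - 𝟏`. -/
def IsDyck (s μ : List ℕ) : Prop :=
  μ.length = s.length ∧ μ.sum + s.length = s.sum ∧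
    ∀ i ≤ s.length, (μ.take i).sum ≤ ((s.take i).map (fun x => x - 1)).sum

/-- The number of peaks of the `s`-Dyck path encoded by `μ`:
`1 + #{i ∈ [a-1] : μ(i) > 0}`. -/
def peaks (μ : List ℕ) : ℕ :=
  1 + (μ.dropLast.filter (fun m => m ≠ 0)).length

/-- `w` is an `s`-permutation: a word on the alphabet `{1,…,ℓ(s)}` with exactly `s(i)`
occurrences of each letter `i`. -/
def IsSPerm (s w : List ℕ) : Prop :=
  (∀ x ∈ w, 1 ≤ x ∧ x ≤ s.length) ∧
    ∀ i : Fin s.length, w.count ((i : ℕ) + 1) = s.get i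

/-- `w` avoids the pattern 212: there are no positions `p < q < r` with
`w_p = w_r` and `w_q < w_p`. -/
def Avoids212 (w : List ℕ) : Prop :=
  ¬ ∃ p q r : Fin w.length, p < q ∧ q < r ∧ w.get p = w.get r ∧ w.get q < w.get p

/-- `w` avoids the pattern 312: there are no positions `p < q < r` with
`w_q < w_r < w_p`. -/
def Avoids312 (w : List ℕ) : Prop :=
  ¬ ∃ p q r : Fin w.length, p < q ∧ q < r ∧ w.get q < w.get r ∧ w.get r < w.get p

/-- The number of ascents of a word `w`: the number of positions `p ∈ [m-1]`
with `w_p < w_{p+1}`. -/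
def ascents (w : List ℕ) : ℕ :=
  ((List.range (w.length - 1)).filter (fun p => w.getD p 0 < w.getD (p + 1) 0)).length

namespace SNar

/-- running prefix maxima, starting from `h` -/
def pms : ℕ → List ℕ → List ℕ
  | _, [] => []
  | h, x :: xs => max h x :: pms (max h x) xs

@[simp] lemma pms_nil (h : ℕ) : pms h [] = [] := rfl
@[simp] lemma pms_cons (h x : ℕ) (xs : List ℕ) :
    pms h (x :: xs) = max h x :: pms (max h x) xs := rfl

@[simp] lemma pms_length (h : ℕ) (w : List ℕ) : (pms h w).length = w.length := by
  induction w generalizing h with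
  | nil => rfl
  | cons x xs ih => simp [ih]

lemma pms_pos (w : List ℕ) (hw : ∀ x ∈ w, 1 ≤ x) (h : ℕ) :
    ∀ u ∈ pms h w, 1 ≤ u := by
  induction w generalizing h with
  | nil => simp
  | cons x xs ih =>
    intro u hu
    rcases List.mem_cons.1 hu with rfl | hu
    · have := hw x (by simp); omega
    · exact ih (fun y hy => hw y (by simp [hy])) _ u hu

lemma pms_ub (w : List ℕ) (a : ℕ) (hw : ∀ x ∈ w, x ≤ a) (h : ℕ) (hh : h ≤ a) :
    ∀ u ∈ pms h w, u ≤ a := by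
  induction w generalizing h with
  | nil => simp
  | cons x xs ih =>
    intro u hu
    have hx := hw x (by simp)
    rcases List.mem_cons.1 hu with rfl | hu
    · omega
    · exact ih (fun y hy => hw y (by simp [hy])) _ (by omega) u hu

lemma pms_chain (w : List ℕ) (h : ℕ) : (pms h w).Chain' (· ≤ ·) := by
  induction w generalizing h with
  | nil => exact List.isChain_nil
  | cons x xs ih =>
    rcases xs with _ | ⟨y, ys⟩
    · exact List.isChain_singleton _
    · exact List.IsChain.cons_cons (le_max_left _ _) (ih _)

lemma pms_getD (w : List ℕ) (h : ℕ) (p : ℕ) (hp : p < w.length) :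
    (pms h w).getD p 0 = (w.take (p + 1)).foldl max h := by
  induction w generalizing h p with
  | nil => simp at hp
  | cons x xs ih =>
    cases p with
    | zero => simp
    | succ p =>
      simp only [pms_cons, List.getD_cons_succ, List.take_succ_cons, List.foldl_cons]
      exact ih _ _ (by simpa using hp)

lemma foldl_max_lt (l : List ℕ) (h v : ℕ) :
    l.foldl max h < v ↔ h < v ∧ ∀ x ∈ l, x < v := by
  induction l generalizing h with
  | nil => simp
  | cons x xs ih =>
    simp only [List.foldl_cons, ih, List.mem_cons]
    constructor
    · rintro ⟨h1, h2⟩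
      refine ⟨by omega, ?_⟩
      rintro y (rfl | hy)
      · omega
      · exact h2 y hy
    · rintro ⟨h1, h2⟩
      exact ⟨by have := h2 x (Or.inl rfl); omega, fun y hy => h2 y (Or.inr hy)⟩

lemma pms_mem_max (w : List ℕ) (a : ℕ) (hw : ∀ x ∈ w, x ≤ a) (h : ℕ) (hh : h ≤ a)
    (ha : a ∈ w) : a ∈ pms h w := by
  induction w generalizing h with
  | nil => simp at ha
  | cons x xs ih =>
    rcases List.mem_cons.1 ha with rfl | ha
    · simp [Nat.max_eq_right hh]
    · have hx := hw x (by simp)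
      exact List.mem_cons_of_mem _
        (ih (fun y hy => hw y (by simp [hy])) _ (by omega) ha)

/-! ### counting lemmas -/

lemma sum_count_eq_countP (l : List ℕ) (hl : ∀ v ∈ l, 1 ≤ v) (i : ℕ) :
    ∑ j ∈ Finset.range i, l.count (j + 1) = l.countP (fun v => v ≤ i) := by
  induction l with
  | nil => simp
  | cons x xs ih =>
    have hx : 1 ≤ x := hl x (by simp)
    have ihx := ih (fun v hv => hl v (by simp [hv]))
    have hcnt : ∀ j : ℕ, (x :: xs).count (j + 1) =
        xs.count (j + 1) + (if x = j + 1 then 1 else 0) := by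
      intro j
      rcases eq_or_ne x (j+1) with h | h
      · simp [List.count_cons, h]
      · simp [List.count_cons, h, Ne.symm h]
    simp only [hcnt, Finset.sum_add_distrib, ihx]
    have : ∑ j ∈ Finset.range i, (if x = j + 1 then 1 else 0)
        = ∑ j ∈ Finset.range i, (if j = x - 1 then 1 else 0) := by
      refine Finset.sum_congr rfl fun j _ => ?_
      by_cases hj : x = j + 1
      · simp [hj, show j + 1 - 1 = j from rfl]
      · simp [hj, show ¬ (j = x - 1) by omega]
    rw [this, Finset.sum_ite_eq' (Finset.range i) (x-1) (fun _ => 1)]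
    simp only [List.countP_cons, Finset.mem_range]
    by_cases hxi : x ≤ i
    · simp [show x - 1 < i by omega, show (x ≤ i) by omega]
    · simp [show ¬ (x - 1 < i) by omega, hxi]

lemma length_eq_sum_count (l : List ℕ) (a : ℕ) (hl : ∀ v ∈ l, 1 ≤ v ∧ v ≤ a) :
    l.length = ∑ j ∈ Finset.range a, l.count (j + 1) := by
  rw [sum_count_eq_countP l (fun v hv => (hl v hv).1) a]
  symm
  rw [List.countP_eq_length]
  intro v hv
  simpa using (hl v hv).2

lemma sum_take_getD (l : List ℕ) (i : ℕ) (hi : i ≤ l.length) :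
    (l.take i).sum = ∑ j ∈ Finset.range i, l.getD j 0 := by
  induction l generalizing i with
  | nil => simp at hi; simp [hi]
  | cons x xs ih =>
    cases i with
    | zero => simp
    | succ i =>
      rw [Finset.sum_range_succ']
      simp only [List.take_succ_cons, List.sum_cons, List.getD_cons_succ, List.getD_cons_zero]
      rw [ih i (by simpa using hi)]
      omega

lemma sum_map_range (f : ℕ → ℕ) (i : ℕ) :
    ((List.range i).map f).sum = ∑ j ∈ Finset.range i, f j := by
  induction i with
  | zero => simp
  | succ i ih => rw [List.range_succ, Finset.sum_range_succ]; simp [ih]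

lemma pms_countP_le (w : List ℕ) (i : ℕ) (h : ℕ) :
    (pms h w).countP (fun v => v ≤ i) ≤ w.countP (fun v => v ≤ i) := by
  induction w generalizing h with
  | nil => simp
  | cons x xs ih =>
    simp only [pms_cons, List.countP_cons]
    have := ih (max h x)
    by_cases hmx : max h x ≤ i
    · have hx : x ≤ i := le_trans (le_max_right h x) hmx
      simp [hmx, hx]; omega
    · simp [hmx]
      by_cases hx : x ≤ i <;> simp [hx] <;> omega


/-! ### phi -/

def phi (a : ℕ) (w : List ℕ) : List ℕ :=
  (List.range a).map fun i => (pms 0 w).count (i + 1)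

lemma word_letters {s w : List ℕ} (hw : IsSPerm (s.map (fun x => x - 1)) w) :
    ∀ x ∈ w, 1 ≤ x ∧ x ≤ s.length := by
  intro x hx
  have := hw.1 x hx
  simpa using this

lemma word_count {s w : List ℕ} (hw : IsSPerm (s.map (fun x => x - 1)) w)
    {j : ℕ} (hj : j < s.length) :
    w.count (j + 1) = s.getD j 0 - 1 := by
  have := hw.2 ⟨j, by simpa using hj⟩
  rw [this]
  rw [List.get_eq_getElem]
  simp [List.getD_eq_getElem?_getD, List.getElem?_eq_getElem hj]

lemma phi_take_sum (a : ℕ) (w : List ℕ) (hw : ∀ x ∈ w, 1 ≤ x) (i : ℕ) (hi : i ≤ a) :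
    ((phi a w).take i).sum = (pms 0 w).countP (fun v => v ≤ i) := by
  unfold phi
  rw [← List.map_take, List.take_range, Nat.min_eq_left hi, sum_map_range]
  exact sum_count_eq_countP _ (pms_pos w hw 0) i

lemma countP_w_eq (s w : List ℕ) (hw : IsSPerm (s.map (fun x => x - 1)) w)
    (i : ℕ) (hi : i ≤ s.length) :
    w.countP (fun v => v ≤ i) = ((s.take i).map (fun x => x - 1)).sum := by
  rw [← sum_count_eq_countP w (fun v hv => (word_letters hw v hv).1) i]
  rw [List.map_take, sum_take_getD _ i (by simpa using hi)]
  refine Finset.sum_congr rfl fun j hj => ?_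
  have hj' : j < s.length := lt_of_lt_of_le (Finset.mem_range.1 hj) hi
  rw [word_count hw hj']
  simp [List.getD_eq_getElem?_getD, List.getElem?_map, List.getElem?_eq_getElem hj']

lemma phi_isDyck (s w : List ℕ) (hs : ∀ x ∈ s, 2 ≤ x)
    (hw : IsSPerm (s.map (fun x => x - 1)) w) : IsDyck s (phi s.length w) := by
  have hwl := word_letters hw
  refine ⟨by simp [phi], ?_, ?_⟩
  · -- sum condition
    have h1 : (phi s.length w).sum = w.length := by
      have := phi_take_sum s.length w (fun x hx => (hwl x hx).1) s.length le_rfl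
      rw [List.take_of_length_le (by simp [phi])] at this
      rw [this]
      have : (pms 0 w).countP (fun v => v ≤ s.length) = (pms 0 w).length := by
        rw [List.countP_eq_length]
        intro v hv
        simpa using pms_ub w s.length (fun x hx => (hwl x hx).2) 0 (by omega) v hv
      rw [this, pms_length]
    rw [h1]
    have h2 : w.length = ∑ j ∈ Finset.range s.length, (s.getD j 0 - 1) := by
      rw [length_eq_sum_count w s.length hwl]
      exact Finset.sum_congr rfl fun j hj => word_count hw (Finset.mem_range.1 hj)
    have h3 : s.sum = ∑ j ∈ Finset.range s.length, s.getD j 0 := by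
      have := sum_take_getD s s.length le_rfl
      rwa [List.take_of_length_le le_rfl] at this
    rw [h2, h3]
    have hge : ∀ j ∈ Finset.range s.length, s.getD j 0 - 1 + 1 = s.getD j 0 := by
      intro j hj
      have hj' : j < s.length := Finset.mem_range.1 hj
      have : 2 ≤ s.getD j 0 := by
        rw [List.getD_eq_getElem _ _ hj']
        exact hs _ (List.getElem_mem hj')
      omega
    calc ∑ j ∈ Finset.range s.length, (s.getD j 0 - 1) + s.length
        = ∑ j ∈ Finset.range s.length, (s.getD j 0 - 1 + 1) := by
          rw [Finset.sum_add_distrib]; simp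
      _ = _ := Finset.sum_congr rfl hge
  · intro i hi
    rw [phi_take_sum s.length w (fun x hx => (hwl x hx).1) i hi]
    calc (pms 0 w).countP (fun v => v ≤ i) ≤ w.countP (fun v => v ≤ i) :=
          pms_countP_le w i 0
      _ = _ := countP_w_eq s w hw i hi


/-! ### the Star property -/

/-- every "ascent pair" value is a strict new record -/
def Star (w : List ℕ) : Prop :=
  ∀ j q r : ℕ, j ≤ q → q < r → r < w.length →
    w.getD q 0 < w.getD r 0 → w.getD j 0 < w.getD r 0

lemma getD_get (w : List ℕ) (p : ℕ) (h : p < w.length) :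
    w.getD p 0 = w.get ⟨p, h⟩ := by
  simp [List.getD_eq_getElem?_getD, List.getElem?_eq_getElem h, List.get_eq_getElem]

lemma avoids_iff_star (w : List ℕ) : (Avoids212 w ∧ Avoids312 w) ↔ Star w := by
  constructor
  · rintro ⟨h212, h312⟩ j q r hjq hqr hr hlt
    by_contra hcon
    push_neg at hcon
    have hq : q < w.length := lt_trans hqr hr
    have hj : j < w.length := by omega
    rcases Nat.lt_or_ge j q with hjq' | hjq'
    · rw [getD_get w q hq, getD_get w r hr] at hlt
      rw [getD_get w r hr, getD_get w j hj] at hcon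
      rcases Nat.lt_or_eq_of_le hcon with hgt | heq
      · exact h312 ⟨⟨j, hj⟩, ⟨q, hq⟩, ⟨r, hr⟩, hjq', hqr, hlt, hgt⟩
      · exact h212 ⟨⟨j, hj⟩, ⟨q, hq⟩, ⟨r, hr⟩, hjq', hqr, heq.symm, by omega⟩
    · have : j = q := le_antisymm hjq (by omega)
      subst this
      omega
  · intro hstar
    constructor
    · rintro ⟨p, q, r, hpq, hqr, heq, hlt⟩
      have h := hstar p q r (le_of_lt hpq) hqr r.isLt
      rw [getD_get w p p.isLt, getD_get w q q.isLt, getD_get w r r.isLt] at h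
      simp only [Fin.eta] at h
      rw [← heq] at h
      have := h hlt
      omega
    · rintro ⟨p, q, r, hpq, hqr, h1, h2⟩
      have h := hstar p q r (le_of_lt hpq) hqr r.isLt
      rw [getD_get w p p.isLt, getD_get w q q.isLt, getD_get w r r.isLt] at h
      simp only [Fin.eta] at h
      have := h h1
      omega

lemma length_filter_range_succ (n : ℕ) (p : ℕ → Bool) :
    ((List.range (n+1)).filter p).length
      = (if p 0 then 1 else 0) + ((List.range n).filter (fun j => p (j+1))).length := by
  rw [← List.countP_eq_length_filter, ← List.countP_eq_length_filter]
  rw [List.range_succ_eq_map, List.countP_cons, List.countP_map]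
  cases hp : p 0 <;> simp [hp, Function.comp_def] <;> try omega

lemma ascents_cons₂ (x y : ℕ) (u : List ℕ) :
    ascents (x :: y :: u) = (if x < y then 1 else 0) + ascents (y :: u) := by
  unfold ascents
  have h1 : (x :: y :: u).length - 1 = u.length + 1 := by simp
  have h2 : (y :: u).length - 1 = u.length := by simp
  rw [h1, h2, length_filter_range_succ]
  have h3 : ∀ j ∈ List.range u.length,
      (decide ((x :: y :: u).getD (j+1) 0 < (x :: y :: u).getD (j+1+1) 0))
        = (decide ((y :: u).getD j 0 < (y :: u).getD (j+1) 0)) := by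
    intro j _
    simp [List.getD_cons_succ]
  rw [List.filter_congr h3]
  simp

lemma le_foldl_max (l : List ℕ) (h : ℕ) : ∀ x ∈ l, x ≤ l.foldl max h := by
  intro x hx
  by_contra hc
  push_neg at hc
  have := (foldl_max_lt l h (l.foldl max h + 1)).1 (by omega)
  have := this.2 x hx
  omega

lemma take_getD_mem (w : List ℕ) (p : ℕ) (hp : p < w.length) :
    w.getD p 0 ∈ w.take (p+1) := by
  have hlen : p < (w.take (p+1)).length := by
    simp [List.length_take]; omega
  have : (w.take (p+1)).getD p 0 = w.getD p 0 := by
    rw [getD_get _ _ hlen, getD_get _ _ hp]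
    simp [List.get_eq_getElem, List.getElem_take]
  rw [← this, getD_get _ _ hlen]
  simp only [List.get_eq_getElem]
  exact List.getElem_mem _

lemma ascents_pms (w : List ℕ) (hstar : Star w) : ascents (pms 0 w) = ascents w := by
  unfold ascents
  rw [pms_length]
  congr 1
  apply List.filter_congr
  intro p hp
  have hp1 : p + 1 < w.length := by
    have := List.mem_range.1 hp; omega
  have hp0 : p < w.length := by omega
  rw [pms_getD w 0 p hp0, pms_getD w 0 (p+1) hp1]
  have htake : w.take (p+1+1) = w.take (p+1) ++ [w.getD (p+1) 0] := by
    rw [List.take_succ]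
    congr
    rw [getD_get _ _ hp1]
    simp [List.getElem?_eq_getElem hp1, List.get_eq_getElem]
  rw [htake, List.foldl_append]
  set A := (w.take (p+1)).foldl max 0 with hA
  set x := w.getD (p+1) 0
  set y := w.getD p 0 with hy
  have hyA : y ≤ A := le_foldl_max _ 0 _ (take_getD_mem w p hp0)
  simp only [List.foldl_cons, List.foldl_nil]
  apply Bool.decide_congr
  constructor
  · intro hlt
    have : A < x := by omega
    omega
  · intro hlt
    have hall : ∀ z ∈ w.take (p+1), z < x := by
      intro z hz
      obtain ⟨j, hj, hjz⟩ := List.mem_iff_getElem.1 hz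
      have hj' : j < w.length := by
        have := hj
        simp [List.length_take] at this
        omega
      have hjp : j ≤ p := by
        have := hj
        simp [List.length_take] at this
        omega
      have : z = w.getD j 0 := by
        rw [getD_get _ _ hj']
        rw [← hjz]
        simp [List.get_eq_getElem, List.getElem_take]
      rw [this]
      exact hstar j p (p+1) hjp (by omega) hp1 hlt
    have : A < x := (foldl_max_lt _ _ _).2 ⟨by omega, hall⟩
    omega

lemma sorted_card (P : List ℕ) (hs : P.Pairwise (· ≤ ·)) (hne : P ≠ []) :
    P.toFinset.card = 1 + ascents P := by
  induction P with
  | nil => simp at hne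
  | cons x u ih =>
    cases u with
    | nil => simp [ascents]
    | cons y v =>
      have hxy : x ≤ y := List.rel_of_pairwise_cons hs (by simp)
      have hsv : (y :: v).Pairwise (· ≤ ·) := hs.of_cons
      have ihv := ih hsv (by simp)
      rw [ascents_cons₂, List.toFinset_cons]
      rcases Nat.lt_or_ge x y with hlt | hge
      · have hnm : x ∉ (y :: v).toFinset := by
          simp only [List.mem_toFinset, List.mem_cons]
          rintro (rfl | hx)
          · omega
          · have := List.rel_of_pairwise_cons hsv hx
            omega
        rw [Finset.card_insert_of_notMem hnm, ihv]
        simp [hlt]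
        omega
      · have hxy' : x = y := by omega
        subst hxy'
        rw [Finset.insert_eq_self.2 (by simp)]
        rw [ihv]
        simp

lemma filter_range_length (a : ℕ) (p : ℕ → Bool) :
    ((List.range a).filter p).length
      = ((Finset.range a).filter (fun i => p i = true)).card := by
  induction a with
  | zero => simp
  | succ a ih =>
    rw [List.range_succ, List.filter_append, List.length_append, Finset.range_add_one,
      Finset.filter_insert]
    by_cases hp : p a = true
    · rw [if_pos hp]
      rw [Finset.card_insert_of_notMem (by simp [Finset.mem_filter])]
      simp [hp, ih]
    · rw [if_neg hp]
      simp [List.filter_cons, hp, ih]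

lemma bucket_card (P : List ℕ) (a : ℕ) (hb : ∀ u ∈ P, 1 ≤ u ∧ u ≤ a) :
    ((List.range a).filter (fun i => decide (P.count (i+1) ≠ 0))).length
      = P.toFinset.card := by
  rw [filter_range_length]
  have himg : P.toFinset
      = ((Finset.range a).filter
          (fun i => decide (P.count (i+1) ≠ 0) = true)).image (fun i => i + 1) := by
    ext v
    simp only [List.mem_toFinset, Finset.mem_image, Finset.mem_filter, Finset.mem_range,
      decide_eq_true_eq, ne_eq, List.count_eq_zero]
    constructor
    · intro hv
      have := hb v hv
      exact ⟨v - 1, ⟨by omega, by rw [show v - 1 + 1 = v by omega]; simpa using hv⟩,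
        by omega⟩
    · rintro ⟨i, ⟨hia, hic⟩, rfl⟩
      simpa using hic
  rw [himg, Finset.card_image_of_injective _ (fun i j h => by omega)]

lemma peaks_phi (a : ℕ) (w : List ℕ) (hne : w ≠ [])
    (hb : ∀ x ∈ w, 1 ≤ x ∧ x ≤ a) (ha : a ∈ w) (hstar : Star w) :
    peaks (phi a w) = 1 + ascents w := by
  have ha1 : 1 ≤ a := (hb a ha).1
  have hPb : ∀ u ∈ pms 0 w, 1 ≤ u ∧ u ≤ a := fun u hu =>
    ⟨pms_pos w (fun x hx => (hb x hx).1) 0 u hu,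
     pms_ub w a (fun x hx => (hb x hx).2) 0 (by omega) u hu⟩
  have haP : a ∈ pms 0 w := pms_mem_max w a (fun x hx => (hb x hx).2) 0 (by omega) ha
  have hsort : (pms 0 w).Pairwise (· ≤ ·) :=
    List.isChain_iff_pairwise.1 (pms_chain w 0)
  have hPne : pms 0 w ≠ [] := by
    intro h
    have := pms_length 0 w
    rw [h] at this
    exact hne (List.length_eq_zero_iff.1 this.symm)
  have hcard := sorted_card (pms 0 w) hsort hPne
  have hbc := bucket_card (pms 0 w) a hPb
  -- rewrite peaks
  unfold peaks phi
  have hrange : List.range a = List.range (a - 1) ++ [a - 1] := by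
    conv_lhs => rw [show a = (a - 1) + 1 by omega]
    rw [List.range_succ]
  rw [hrange, List.map_append]
  rw [show (List.map (fun i => (pms 0 w).count (i + 1)) [a-1])
      = [(pms 0 w).count (a - 1 + 1)] from rfl]
  rw [List.dropLast_concat]
  -- filter of map
  rw [← List.countP_eq_length_filter, List.countP_map]
  have hstep : List.countP ((fun m => decide (m ≠ 0)) ∘ fun i => (pms 0 w).count (i + 1))
      (List.range (a-1))
      = ((List.range (a-1)).filter (fun i => decide ((pms 0 w).count (i+1) ≠ 0))).length := by
    rw [← List.countP_eq_length_filter]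
    rfl
  rw [hstep]
  -- relate range (a-1) filter to range a filter
  have hsplit : ((List.range a).filter (fun i => decide ((pms 0 w).count (i+1) ≠ 0))).length
      = ((List.range (a-1)).filter (fun i => decide ((pms 0 w).count (i+1) ≠ 0))).length
        + 1 := by
    rw [hrange, List.filter_append, List.length_append]
    have : (pms 0 w).count (a - 1 + 1) ≠ 0 := by
      rw [show a - 1 + 1 = a by omega]
      rw [Ne, List.count_eq_zero]
      simp [haP]
    simp [List.filter_cons, this]
  rw [hbc, hcard, ascents_pms w hstar] at hsplit
  omega

/-! ### the greedy word associated to a Dyck path -/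

def dec (c : ℕ → ℕ) (x : ℕ) : ℕ → ℕ := fun y => if y = x then c y - 1 else c y

def pick (c : ℕ → ℕ) : ℕ → ℕ
  | 0 => 0
  | i + 1 => if c (i+1) ≠ 0 then i + 1 else pick c i

def psi (c : ℕ → ℕ) (i : ℕ) : List ℕ → List ℕ
  | [] => []
  | 0 :: μ => psi c (i+1) μ
  | (m+1) :: μ => pick c i :: psi (dec c (pick c i)) i (m :: μ)
termination_by l => (l.length, l.headD 0)

lemma pick_le (c : ℕ → ℕ) (i : ℕ) : pick c i ≤ i := by
  induction i with
  | zero => simp [pick]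
  | succ i ih => rw [pick]; split <;> omega

lemma pick_spec (c : ℕ → ℕ) (i : ℕ) (h : ∃ x ≤ i, 1 ≤ c x) : 1 ≤ c (pick c i) := by
  induction i with
  | zero =>
    obtain ⟨x, hx, hcx⟩ := h
    interval_cases x
    simpa [pick] using hcx
  | succ i ih =>
    rw [pick]
    split
    · omega
    · rename_i hc
      apply ih
      obtain ⟨x, hx, hcx⟩ := h
      refine ⟨x, ?_, hcx⟩
      rcases Nat.lt_or_ge x (i+1) with h' | h'
      · omega
      · exfalso; have : x = i + 1 := by omega
        subst this; omega
  
lemma pick_max (c : ℕ → ℕ) (i z : ℕ) (hz : z ≤ i) (hcz : 1 ≤ c z) : z ≤ pick c i := by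
  induction i with
  | zero => omega
  | succ i ih =>
    rw [pick]
    split
    · omega
    · rename_i hc
      have : z ≠ i + 1 := by intro h; subst h; omega
      exact ih (by omega)

lemma pick_eq_self (c : ℕ → ℕ) (i : ℕ) (hi : 1 ≤ i) (hc : 1 ≤ c i) : pick c i = i := by
  cases i with
  | zero => omega
  | succ i => rw [pick]; split <;> omega

structure Inv (c : ℕ → ℕ) (i : ℕ) (l : List ℕ) : Prop where
  pos : 1 ≤ i
  zero : c 0 = 0
  avail : ∀ d : ℕ, (l.take (d+1)).sum ≤ ∑ x ∈ Finset.range (i+d+1), c x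
  total : l.sum = ∑ x ∈ Finset.range (i + l.length), c x
  supp : ∀ x, i + l.length ≤ x → c x = 0
  upper : ∀ x, i < x → x < i + l.length → 1 ≤ c x

lemma sum_dec (c : ℕ → ℕ) (x N : ℕ) (hx : x < N) (hc : 1 ≤ c x) :
    ∑ y ∈ Finset.range N, dec c x y = (∑ y ∈ Finset.range N, c y) - 1 := by
  have hmem : x ∈ Finset.range N := Finset.mem_range.2 hx
  rw [← Finset.sum_erase_add _ _ hmem, ← Finset.sum_erase_add _ c hmem]
  have : ∑ y ∈ (Finset.range N).erase x, dec c x y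
      = ∑ y ∈ (Finset.range N).erase x, c y := by
    refine Finset.sum_congr rfl fun y hy => ?_
    have : y ≠ x := Finset.ne_of_mem_erase hy
    simp [dec, this]
  rw [this]
  have hxx : dec c x x = c x - 1 := by simp [dec]
  rw [hxx]
  set S := ∑ y ∈ (Finset.range N).erase x, c y with hS
  omega

lemma inv_exists_pick {c : ℕ → ℕ} {i : ℕ} {m : ℕ} {μ : List ℕ}
    (h : Inv c i ((m+1) :: μ)) : ∃ x ≤ i, 1 ≤ c x := by
  have h0 := h.avail 0
  by_contra hc
  push_neg at hc
  have hz : ∑ x ∈ Finset.range (i + 0 + 1), c x = 0 :=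
    Finset.sum_eq_zero fun x hx => by
      have := hc x (by have := Finset.mem_range.1 hx; omega)
      omega
  rw [hz] at h0
  simp at h0

lemma inv_pick_facts {c : ℕ → ℕ} {i : ℕ} {m : ℕ} {μ : List ℕ}
    (h : Inv c i ((m+1) :: μ)) :
    1 ≤ pick c i ∧ pick c i ≤ i ∧ 1 ≤ c (pick c i) := by
  have hcp := pick_spec c i (inv_exists_pick h)
  refine ⟨?_, pick_le c i, hcp⟩
  by_contra hp
  push_neg at hp
  have hpp : pick c i = 0 := by omega
  rw [hpp, h.zero] at hcp
  omega

lemma inv_zero_step {c : ℕ → ℕ} {i : ℕ} {μ : List ℕ}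
    (h : Inv c i (0 :: μ)) : Inv c (i+1) μ := by
  refine ⟨by omega, h.zero, ?_, ?_, ?_, ?_⟩
  · intro d
    have := h.avail (d+1)
    simp only [List.take_succ_cons, List.sum_cons] at this
    calc (μ.take (d+1)).sum = (List.take (d+1+1) (0 :: μ)).sum := by simp
      _ ≤ _ := by
          have := h.avail (d+1)
          convert this using 3
          omega
  · have := h.total
    simp only [List.sum_cons, List.length_cons, Nat.zero_add] at this
    rw [this, show i + (μ.length + 1) = i + 1 + μ.length by omega]
  · intro x hx
    exact h.supp x (by simp only [List.length_cons]; omega)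
  · intro x hx1 hx2
    exact h.upper x (by omega) (by simp only [List.length_cons]; omega)

lemma inv_pick_step {c : ℕ → ℕ} {i : ℕ} {m : ℕ} {μ : List ℕ}
    (h : Inv c i ((m+1) :: μ)) : Inv (dec c (pick c i)) i (m :: μ) := by
  obtain ⟨hp1, hp2, hp3⟩ := inv_pick_facts h
  refine ⟨h.pos, ?_, ?_, ?_, ?_, ?_⟩
  · simp only [dec]
    rw [if_neg (by omega)]
    exact h.zero
  · intro d
    have havail := h.avail d
    rw [sum_dec c (pick c i) _ (by omega) hp3]
    simp only [List.take_succ_cons, List.sum_cons] at havail ⊢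
    omega
  · have := h.total
    simp only [List.sum_cons, List.length_cons] at this ⊢
    rw [sum_dec c (pick c i) _ (by omega) hp3]
    omega
  · intro x hx
    simp only [List.length_cons] at hx
    have := h.supp x (by simp only [List.length_cons]; omega)
    simp only [dec]
    split <;> omega
  · intro x hx1 hx2
    simp only [List.length_cons] at hx2
    have := h.upper x hx1 (by simp only [List.length_cons]; omega)
    simp only [dec]
    rw [if_neg (by omega)]
    exact this

lemma psi_count (c : ℕ → ℕ) (i : ℕ) (l : List ℕ) (h : Inv c i l) :
    ∀ y, (psi c i l).count y = c y := by
  induction c, i, l using psi.induct with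
  | case1 c i =>
    intro y
    simp only [psi, List.count_nil]
    rcases Nat.lt_or_ge y (i + 0) with hy | hy
    · have ht := h.total
      simp only [List.length_nil, List.sum_nil, Nat.add_zero] at ht
      have := Finset.sum_eq_zero_iff.1 ht.symm y (Finset.mem_range.2 (by omega))
      omega
    · exact (h.supp y (by simp; omega)).symm
  | case2 c i μ ih =>
    intro y
    rw [psi]
    exact ih (inv_zero_step h) y
  | case3 c i m μ ih =>
    intro y
    obtain ⟨hp1, hp2, hp3⟩ := inv_pick_facts h
    rw [psi]
    rw [List.count_cons]
    rw [ih (inv_pick_step h) y]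
    simp only [dec]
    rcases eq_or_ne y (pick c i) with rfl | hne
    · simp
      omega
    · simp [hne, Ne.symm hne]

lemma getD_mem (w : List ℕ) (p : ℕ) (hp : p < w.length) : w.getD p 0 ∈ w := by
  rw [getD_get w p hp]
  simp only [List.get_eq_getElem]
  exact List.getElem_mem _

def StarF (h : ℕ) (w : List ℕ) : Prop :=
  ∀ q r : ℕ, q < r → r < w.length → w.getD q 0 < w.getD r 0 → h < w.getD r 0

lemma psi_star (c : ℕ → ℕ) (i : ℕ) (l : List ℕ) (h : Inv c i l) :
    Star (psi c i l) ∧ StarF i (psi c i l) := by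
  induction c, i, l using psi.induct with
  | case1 c i =>
    constructor
    · intro j q r _ _ hr
      simp [psi] at hr
    · intro q r _ hr
      simp [psi] at hr
  | case2 c i μ ih =>
    obtain ⟨hstar, hsf⟩ := ih (inv_zero_step h)
    rw [psi]
    refine ⟨hstar, fun q r hqr hr hlt => ?_⟩
    have := hsf q r hqr hr hlt
    omega
  | case3 c i m μ ih =>
    obtain ⟨hp1, hp2, hp3⟩ := inv_pick_facts h
    have hinv' := inv_pick_step h
    obtain ⟨hstar, hsf⟩ := ih hinv'
    rw [psi]
    set x := pick c i with hx
    set rest := psi (dec c x) i (m :: μ) with hrest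
    have hmem : ∀ y ∈ rest, y ≤ i → y ≤ x := by
      intro y hy hyi
      have hcount : rest.count y = dec c x y := psi_count _ _ _ hinv' y
      have hpos : 0 < rest.count y := List.count_pos_iff.2 hy
      have hcy : 1 ≤ c y := by
        rw [hcount] at hpos
        simp only [dec] at hpos
        split at hpos <;> omega
      exact pick_max c i y hyi hcy
    have hsf' : StarF i (x :: rest) := by
      intro q r hqr hr hlt
      rcases r with _ | r
      · omega
      · have hr' : r < rest.length := by simpa using hr
        rw [List.getD_cons_succ] at hlt ⊢
        have hmem' : rest.getD r 0 ∈ rest := getD_mem rest r hr'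
        by_contra hcon
        push_neg at hcon
        have := hmem _ hmem' (by omega)
        rcases q with _ | q
        · rw [List.getD_cons_zero] at hlt
          omega
        · rw [List.getD_cons_succ] at hlt
          exact absurd (hsf q r (by omega) hr' hlt) (by omega)
    refine ⟨?_, hsf'⟩
    intro j q r hjq hqr hr hlt
    rcases j with _ | j
    · rcases q with _ | q
      · exact hlt
      · have := hsf' (q+1) r (by omega) hr hlt
        rw [List.getD_cons_zero]
        omega
    · rcases q with _ | q
      · omega
      · rcases r with _ | r
        · omega
        · rw [List.getD_cons_succ] at hlt ⊢
          rw [List.getD_cons_succ] at hlt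
          exact hstar j q r (by omega) (by omega) (by simpa using hr) hlt

def hlist (i : ℕ) : List ℕ → List ℕ
  | [] => []
  | m :: μ => List.replicate m i ++ hlist (i+1) μ

lemma psi_pms (c : ℕ → ℕ) (i : ℕ) (l : List ℕ) (h : Inv c i l) :
    ∀ hh : ℕ, (hh < i ∧ 1 ≤ c i) ∨ hh = i → pms hh (psi c i l) = hlist i l := by
  induction c, i, l using psi.induct with
  | case1 c i =>
    intro hh _
    simp [psi, hlist]
  | case2 c i μ ih =>
    intro hh hcase
    rw [psi]
    cases μ with
    | nil =>
      rw [psi]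
      simp [hlist]
    | cons m μ' =>
      have hc : 1 ≤ c (i+1) := h.upper (i+1) (by omega) (by simp only [List.length_cons]; omega)
      rw [show hlist i (0 :: m :: μ') = hlist (i+1) (m :: μ') by simp [hlist]]
      exact ih (inv_zero_step h) hh (Or.inl ⟨by omega, hc⟩)
  | case3 c i m μ ih =>
    intro hh hcase
    obtain ⟨hp1, hp2, hp3⟩ := inv_pick_facts h
    have hinv' := inv_pick_step h
    rw [psi, pms_cons]
    have hrec := ih hinv' i (Or.inr rfl)
    have hpick_i : max hh (pick c i) = i := by
      rcases hcase with ⟨hhi, hci⟩ | rfl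
      · have : pick c i = i := pick_eq_self c i h.pos hci
        omega
      · have := pick_le c hh
        omega
    rw [hpick_i, hrec]
    show i :: (List.replicate m i ++ hlist (i+1) μ) = hlist i ((m+1) :: μ)
    rw [show hlist i ((m+1) :: μ) = List.replicate (m+1) i ++ hlist (i+1) μ from rfl]
    simp [List.replicate_succ]

lemma hlist_count (μ : List ℕ) (i v : ℕ) :
    (hlist i μ).count v
      = if i ≤ v ∧ v < i + μ.length then μ.getD (v - i) 0 else 0 := by
  induction μ generalizing i with
  | nil => simp [hlist]
  | cons m μ' ih =>
    rw [show hlist i (m :: μ') = List.replicate m i ++ hlist (i+1) μ' from rfl]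
    rw [List.count_append, List.count_replicate, ih (i+1)]
    simp only [List.length_cons, beq_iff_eq]
    by_cases hvi : v = i
    · subst hvi
      rw [if_pos rfl, if_neg (by omega), if_pos (show v ≤ v ∧ v < v + (μ'.length + 1) by omega)]
      rw [Nat.sub_self, List.getD_cons_zero]
      omega
    · rw [if_neg (show ¬ i = v by omega)]
      rcases Nat.lt_or_ge v (i+1) with hv | hv
      · rw [if_neg (by omega), if_neg (by omega)]
      · rcases Nat.lt_or_ge v (i + 1 + μ'.length) with hv2 | hv2
        · rw [if_pos (by omega), if_pos (by omega)]
          rw [show v - i = v - (i+1) + 1 by omega, List.getD_cons_succ]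
          omega
        · rw [if_neg (by omega), if_neg (by omega)]

/-! ### uniqueness of the greedy word -/

lemma star_tail {x : ℕ} {u : List ℕ} (h : Star (x :: u)) : Star u := by
  intro j q r hjq hqr hr hlt
  have := h (j+1) (q+1) (r+1) (by omega) (by omega) (by simpa using hr)
  simp only [List.getD_cons_succ] at this
  exact this hlt

lemma starF_tail {x h : ℕ} {u : List ℕ} (hst : Star (x :: u)) (hsf : StarF h (x :: u)) :
    StarF (max h x) u := by
  intro q r hqr hr hlt
  have h1 := hsf (q+1) (r+1) (by omega) (by simpa using hr)
  have h2 := hst 0 (q+1) (r+1) (by omega) (by omega) (by simpa using hr)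
  simp only [List.getD_cons_succ, List.getD_cons_zero] at h1 h2
  have := h1 hlt
  have := h2 hlt
  omega

lemma greedy_unique : ∀ (w w' : List ℕ) (h : ℕ),
    Star w → Star w' → StarF h w → StarF h w' →
    (∀ v, w.count v = w'.count v) → pms h w = pms h w' → w = w' := by
  intro w
  induction w with
  | nil =>
    intro w' h _ _ _ _ hcnt _
    cases w' with
    | nil => rfl
    | cons y u =>
      have := hcnt y
      simp [List.count_cons] at this
  | cons x u ih =>
    intro w' h hst hst' hsf hsf' hcnt hpms
    cases w' with
    | nil =>
      have := hcnt x
      simp [List.count_cons] at this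
    | cons x' u' =>
      simp only [pms_cons, List.cons.injEq] at hpms
      obtain ⟨hhead, htail⟩ := hpms
      -- show x = x'
      have hxx : x = x' := by
        rcases Nat.lt_or_ge h x with hgt | hle
        · rcases Nat.lt_or_ge h x' with hgt' | hle'
          · omega
          · omega
        · rcases Nat.lt_or_ge h x' with hgt' | hle'
          · omega
          · -- both ≤ h
            have hx'mem : x' ∈ x :: u := by
              rw [← List.count_pos_iff]
              rw [hcnt x']
              simp [List.count_cons]
            have hxmem : x ∈ x' :: u' := by
              rw [← List.count_pos_iff]
              rw [← hcnt x]
              simp [List.count_cons]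
            have h1 : x' ≤ x := by
              by_contra hc
              push_neg at hc
              rcases List.mem_cons.1 hx'mem with heq | hmem
              · omega
              · obtain ⟨r, hr, hru⟩ := List.mem_iff_getElem.1 hmem
                have hgetd : (x :: u).getD (r+1) 0 = x' := by
                  rw [List.getD_cons_succ, getD_get _ _ hr]
                  simpa [List.get_eq_getElem] using hru
                have := hsf 0 (r+1) (by omega) (by simpa using hr)
                rw [List.getD_cons_zero, hgetd] at this
                have := this hc
                omega
            have h2 : x ≤ x' := by
              by_contra hc
              push_neg at hc
              rcases List.mem_cons.1 hxmem with heq | hmem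
              · omega
              · obtain ⟨r, hr, hru⟩ := List.mem_iff_getElem.1 hmem
                have hgetd : (x' :: u').getD (r+1) 0 = x := by
                  rw [List.getD_cons_succ, getD_get _ _ hr]
                  simpa [List.get_eq_getElem] using hru
                have := hsf' 0 (r+1) (by omega) (by simpa using hr)
                rw [List.getD_cons_zero, hgetd] at this
                have := this hc
                omega
            omega
      subst hxx
      have hcnt' : ∀ v, u.count v = u'.count v := by
        intro v
        have := hcnt v
        simp only [List.count_cons] at this
        split at this <;> omega
      have := ih u' (max h x) (star_tail hst) (star_tail hst')
        (starF_tail hst hsf) (starF_tail hst' hsf') hcnt' htail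
      rw [this]

/-! ### initial invariant -/

def c0 (s : List ℕ) : ℕ → ℕ := fun x => if x = 0 then 0 else s.getD (x-1) 0 - 1

lemma sum_getD_sub_one (s : List ℕ) (hs : ∀ x ∈ s, 2 ≤ x) :
    ∑ j ∈ Finset.range s.length, (s.getD j 0 - 1) + s.length = s.sum := by
  have h3 : s.sum = ∑ j ∈ Finset.range s.length, s.getD j 0 := by
    have := sum_take_getD s s.length le_rfl
    rwa [List.take_of_length_le le_rfl] at this
  rw [h3]
  have hge : ∀ j ∈ Finset.range s.length, s.getD j 0 - 1 + 1 = s.getD j 0 := by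
    intro j hj
    have hj' : j < s.length := Finset.mem_range.1 hj
    have : 2 ≤ s.getD j 0 := by
      rw [List.getD_eq_getElem _ _ hj']
      exact hs _ (List.getElem_mem hj')
    omega
  calc ∑ j ∈ Finset.range s.length, (s.getD j 0 - 1) + s.length
      = ∑ j ∈ Finset.range s.length, (s.getD j 0 - 1 + 1) := by
        rw [Finset.sum_add_distrib]; simp
    _ = _ := Finset.sum_congr rfl hge

lemma c0_sum (s : List ℕ) (N : ℕ) :
    ∑ x ∈ Finset.range (N + 1), c0 s x = ∑ j ∈ Finset.range N, (s.getD j 0 - 1) := by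
  rw [Finset.sum_range_succ']
  simp only [c0]
  simp

lemma inv_init (s μ : List ℕ) (hs : ∀ x ∈ s, 2 ≤ x) (hd : IsDyck s μ) :
    Inv (c0 s) 1 μ := by
  obtain ⟨hlen, hsum, htake⟩ := hd
  have hM : ∀ i, i ≤ s.length →
      ((s.take i).map (fun x => x - 1)).sum = ∑ j ∈ Finset.range i, (s.getD j 0 - 1) := by
    intro i hi
    rw [List.map_take, sum_take_getD _ i (by simpa using hi)]
    refine Finset.sum_congr rfl fun j hj => ?_
    have hj' : j < s.length := lt_of_lt_of_le (Finset.mem_range.1 hj) hi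
    simp [List.getD_eq_getElem?_getD, List.getElem?_map, List.getElem?_eq_getElem hj']
  have htotal : μ.sum = ∑ x ∈ Finset.range (1 + μ.length), c0 s x := by
    rw [show 1 + μ.length = μ.length + 1 by omega, c0_sum, hlen]
    have := sum_getD_sub_one s hs
    omega
  refine ⟨le_rfl, by simp [c0], ?_, htotal, ?_, ?_⟩
  · intro d
    rcases Nat.lt_or_ge s.length (d+1) with hlt | hle
    · rw [List.take_of_length_le (by omega)]
      rw [htotal]
      apply Finset.sum_le_sum_of_subset
      apply Finset.range_subset_range.2
      omega
    · calc (μ.take (d+1)).sum ≤ ((s.take (d+1)).map (fun x => x - 1)).sum := htake _ hle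
        _ = ∑ j ∈ Finset.range (d+1), (s.getD j 0 - 1) := hM _ hle
        _ = ∑ x ∈ Finset.range (1 + d + 1), c0 s x := by
            rw [show 1 + d + 1 = (d+1) + 1 by omega, c0_sum]
  · intro x hx
    simp only [c0]
    rw [if_neg (by omega)]
    rw [List.getD_eq_default _ _ (show s.length ≤ x - 1 by omega)]
  · intro x hx1 hx2
    simp only [c0]
    rw [if_neg (by omega)]
    have hxs : x - 1 < s.length := by omega
    have : 2 ≤ s.getD (x-1) 0 := by
      rw [List.getD_eq_getElem _ _ hxs]
      exact hs _ (List.getElem_mem hxs)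
    omega

/-! ### assembly -/

lemma starF_zero (w : List ℕ) : StarF 0 w := by
  intro q r _ _ hlt
  omega

lemma word_mem_top (s w : List ℕ) (hs : ∀ x ∈ s, 2 ≤ x) (hsne : s ≠ [])
    (hw : IsSPerm (s.map (fun x => x - 1)) w) : s.length ∈ w := by
  have ha : 1 ≤ s.length := List.length_pos_iff.2 hsne
  have hfin : s.length - 1 < (s.map (fun x => x - 1)).length := by simp; omega
  have := hw.2 ⟨s.length - 1, hfin⟩
  rw [← List.count_pos_iff]
  rw [show s.length - 1 + 1 = s.length by omega] at this
  rw [this]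
  simp only [List.get_eq_getElem, List.getElem_map]
  have hlt : s.length - 1 < s.length := by omega
  have := hs _ (List.getElem_mem hlt)
  omega

lemma word_count_eq (s w w' : List ℕ) (hw : IsSPerm (s.map (fun x => x - 1)) w)
    (hw' : IsSPerm (s.map (fun x => x - 1)) w') : ∀ v, w.count v = w'.count v := by
  intro v
  rcases Nat.eq_zero_or_pos v with rfl | hv
  · rw [List.count_eq_zero.2 (fun hmem => by have := (hw.1 0 hmem).1; omega),
      List.count_eq_zero.2 (fun hmem => by have := (hw'.1 0 hmem).1; omega)]
  · rcases Nat.lt_or_ge (v - 1) s.length with hlt | hge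
    · have hfin : v - 1 < (s.map (fun x => x - 1)).length := by simp; omega
      have h1 := hw.2 ⟨v - 1, hfin⟩
      have h2 := hw'.2 ⟨v - 1, hfin⟩
      rw [show v - 1 + 1 = v by omega] at h1 h2
      rw [h1, h2]
    · rw [List.count_eq_zero.2 (fun hmem => by have := (hw.1 v hmem).2; simp at this; omega),
        List.count_eq_zero.2 (fun hmem => by have := (hw'.1 v hmem).2; simp at this; omega)]

lemma count_pms_eq_of_phi (a : ℕ) (w w' : List ℕ)
    (hb : ∀ x ∈ w, 1 ≤ x ∧ x ≤ a) (hb' : ∀ x ∈ w', 1 ≤ x ∧ x ≤ a)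
    (h : phi a w = phi a w') : ∀ v, (pms 0 w).count v = (pms 0 w').count v := by
  intro v
  rcases Nat.eq_zero_or_pos v with rfl | hv
  · rw [List.count_eq_zero.2 (fun hmem => by
        have := pms_pos w (fun x hx => (hb x hx).1) 0 0 hmem; omega),
      List.count_eq_zero.2 (fun hmem => by
        have := pms_pos w' (fun x hx => (hb' x hx).1) 0 0 hmem; omega)]
  · rcases Nat.lt_or_ge (v - 1) a with hlt | hge
    · have hlen : v - 1 < (phi a w).length := by simp [phi]; omega
      have e1 : (phi a w).getD (v-1) 0 = (pms 0 w).count v := by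
        rw [getD_get _ _ hlen]
        simp only [phi, List.get_eq_getElem, List.getElem_map, List.getElem_range]
        rw [show v - 1 + 1 = v by omega]
      have hlen' : v - 1 < (phi a w').length := by simp [phi]; omega
      have e2 : (phi a w').getD (v-1) 0 = (pms 0 w').count v := by
        rw [getD_get _ _ hlen']
        simp only [phi, List.get_eq_getElem, List.getElem_map, List.getElem_range]
        rw [show v - 1 + 1 = v by omega]
      rw [← e1, ← e2, h]
    · rw [List.count_eq_zero.2 (fun hmem => by
          have := pms_ub w a (fun x hx => (hb x hx).2) 0 (by omega) v hmem; omega),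
        List.count_eq_zero.2 (fun hmem => by
          have := pms_ub w' a (fun x hx => (hb' x hx).2) 0 (by omega) v hmem; omega)]

lemma phi_inj (a : ℕ) (w w' : List ℕ)
    (hb : ∀ x ∈ w, 1 ≤ x ∧ x ≤ a) (hb' : ∀ x ∈ w', 1 ≤ x ∧ x ≤ a)
    (hst : Star w) (hst' : Star w')
    (hcnt : ∀ v, w.count v = w'.count v)
    (h : phi a w = phi a w') : w = w' := by
  have hperm : List.Perm (pms 0 w) (pms 0 w') :=
    List.perm_iff_count.2 (count_pms_eq_of_phi a w w' hb hb' h)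
  have hpms : pms 0 w = pms 0 w' :=
    List.Perm.eq_of_pairwise'
      (List.isChain_iff_pairwise.1 (pms_chain w 0))
      (List.isChain_iff_pairwise.1 (pms_chain w' 0)) hperm
  exact greedy_unique w w' 0 hst hst' (starF_zero w) (starF_zero w') hcnt hpms

lemma psi_isGoodWord (s μ : List ℕ) (hs : ∀ x ∈ s, 2 ≤ x) (hsne : s ≠ [])
    (hd : IsDyck s μ) :
    IsSPerm (s.map (fun x => x - 1)) (psi (c0 s) 1 μ) ∧ Star (psi (c0 s) 1 μ) ∧
      phi s.length (psi (c0 s) 1 μ) = μ := by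
  have ha : 1 ≤ s.length := List.length_pos_iff.2 hsne
  have hinv := inv_init s μ hs hd
  have hcnt := psi_count _ _ _ hinv
  set w := psi (c0 s) 1 μ with hw
  have hmemc : ∀ x ∈ w, 1 ≤ c0 s x := by
    intro x hx
    have := List.count_pos_iff.2 hx
    rw [hcnt x] at this
    omega
  have hletters : ∀ x ∈ w, 1 ≤ x ∧ x ≤ s.length := by
    intro x hx
    have hc := hmemc x hx
    simp only [c0] at hc
    constructor
    · by_contra h0
      rw [if_pos (by omega)] at hc
      omega
    · by_contra h0
      push_neg at h0
      rw [if_neg (by intro h'; subst h'; omega)] at hc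
      rw [List.getD_eq_default _ _ (show s.length ≤ x - 1 by omega)] at hc
      omega
  have hsperm : IsSPerm (s.map (fun x => x - 1)) w := by
    refine ⟨by simpa using hletters, ?_⟩
    intro i
    rw [hcnt]
    simp only [c0]
    rw [if_neg (by omega)]
    simp only [List.get_eq_getElem, List.getElem_map, Nat.add_sub_cancel]
    have hi : (i : ℕ) < s.length := by have := i.isLt; simpa using this
    rw [List.getD_eq_getElem _ _ hi]
  refine ⟨hsperm, (psi_star _ _ _ hinv).1, ?_⟩
  have hc01 : 1 ≤ c0 s 1 := by
    simp only [c0]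
    rw [if_neg (by omega)]
    have h0 : (0:ℕ) < s.length := by omega
    have := hs _ (List.getElem_mem h0)
    rw [List.getD_eq_getElem _ _ h0]
    omega
  have hpm : pms 0 w = hlist 1 μ := psi_pms _ _ _ hinv 0 (Or.inl ⟨by omega, hc01⟩)
  have hlen : μ.length = s.length := hd.1
  apply List.ext_getElem
  · simp [phi, hlen]
  · intro i h1 h2
    simp only [phi, List.getElem_map, List.getElem_range, hpm]
    rw [hlist_count]
    have hi : i < s.length := by simpa [phi] using h1
    rw [if_pos (by simp; omega)]
    simp only [Nat.add_sub_cancel]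
    rw [List.getD_eq_getElem _ _ (by omega)]

end SNar

theorem narayana_paths_permutations' (s : List ℕ) (hs : ∀ x ∈ s, 2 ≤ x) (k : ℕ) (hk : 1 ≤ k) :
    Nat.card {μ : List ℕ // IsDyck s μ ∧ peaks μ = k} =
      Nat.card {w : List ℕ // IsSPerm (s.map (fun x => x - 1)) w ∧ Avoids212 w ∧
        Avoids312 w ∧ ascents w = k - 1} := by
  rcases eq_or_ne s [] with rfl | hsne
  · have hL : ∀ μ : List ℕ, (IsDyck [] μ ∧ peaks μ = k) ↔ (μ = [] ∧ k = 1) := by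
      intro μ
      constructor
      · rintro ⟨⟨h1, _, _⟩, hp⟩
        have hμ : μ = [] := List.length_eq_zero_iff.1 (by simpa using h1)
        subst hμ
        simp [peaks] at hp
        exact ⟨rfl, hp.symm⟩
      · rintro ⟨rfl, rfl⟩
        exact ⟨⟨rfl, by simp, by simp⟩, by simp [peaks]⟩
    have hR : ∀ w : List ℕ, (IsSPerm (List.map (fun x => x - 1) []) w ∧ Avoids212 w ∧
        Avoids312 w ∧ ascents w = k - 1) ↔ (w = [] ∧ k = 1) := by
      intro w
      constructor
      · rintro ⟨⟨h1, _⟩, _, _, hasc⟩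
        have hw : w = [] := by
          rw [List.eq_nil_iff_forall_not_mem]
          intro x hx
          have := h1 x hx
          simp at this
          omega
        subst hw
        simp [ascents] at hasc
        refine ⟨rfl, by omega⟩
      · rintro ⟨rfl, rfl⟩
        refine ⟨⟨by simp, ?_⟩, ?_, ?_, by simp [ascents]⟩
        · intro i
          exact absurd i.isLt (by simp)
        · rintro ⟨p, _, _, _⟩
          exact p.elim0
        · rintro ⟨p, _, _, _⟩
          exact p.elim0
    rw [Nat.card_congr (Equiv.subtypeEquivRight hL),
      Nat.card_congr (Equiv.subtypeEquivRight hR)]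
  · have ha : 1 ≤ s.length := List.length_pos_iff.2 hsne
    refine Nat.card_congr (Equiv.symm ?_)
    refine
      { toFun := fun x => ⟨SNar.phi s.length x.1, ?_, ?_⟩
        invFun := fun y => ⟨SNar.psi (SNar.c0 s) 1 y.1, ?_, ?_, ?_, ?_⟩
        left_inv := ?_
        right_inv := ?_ }
    · exact SNar.phi_isDyck s x.1 hs x.2.1
    · obtain ⟨hsp, h212, h312, hasc⟩ := x.2
      have hstar := (SNar.avoids_iff_star x.1).1 ⟨h212, h312⟩
      have hb := SNar.word_letters hsp
      have hmem := SNar.word_mem_top s x.1 hs hsne hsp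
      have hne : x.1 ≠ [] := by
        intro h
        rw [h] at hmem
        simp at hmem
      rw [SNar.peaks_phi s.length x.1 hne hb hmem hstar]
      omega
    · exact (SNar.psi_isGoodWord s y.1 hs hsne y.2.1).1
    · exact ((SNar.avoids_iff_star _).2 (SNar.psi_isGoodWord s y.1 hs hsne y.2.1).2.1).1
    · exact ((SNar.avoids_iff_star _).2 (SNar.psi_isGoodWord s y.1 hs hsne y.2.1).2.1).2
    · obtain ⟨hsp, hstar, hphi⟩ := SNar.psi_isGoodWord s y.1 hs hsne y.2.1
      have hb := SNar.word_letters hsp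
      have hmem := SNar.word_mem_top s _ hs hsne hsp
      have hne : SNar.psi (SNar.c0 s) 1 y.1 ≠ [] := by
        intro h
        rw [h] at hmem
        simp at hmem
      have := SNar.peaks_phi s.length _ hne hb hmem hstar
      rw [hphi] at this
      have hpk := y.2.2
      omega
    · intro x
      apply Subtype.ext
      obtain ⟨hsp, h212, h312, hasc⟩ := x.2
      have hstar := (SNar.avoids_iff_star x.1).1 ⟨h212, h312⟩
      have hdyck := SNar.phi_isDyck s x.1 hs hsp
      obtain ⟨hsp', hstar', hphi'⟩ := SNar.psi_isGoodWord s _ hs hsne hdyck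
      exact SNar.phi_inj s.length _ x.1 (SNar.word_letters hsp') (SNar.word_letters hsp)
        hstar' hstar (SNar.word_count_eq s _ _ hsp' hsp) hphi'
    · intro y
      apply Subtype.ext
      exact (SNar.psi_isGoodWord s y.1 hs hsne y.2.1).2.2


/-- The `s`-Narayana equality: for every composition `s` with entries at least 2 and
every `k ≥ 1`, the number of `s`-Dyck paths with exactly `k` peaks equals the number of
312-avoiding Stirling `(s-𝟏)`-permutations with exactly `k - 1` ascents. -/
theorem narayana_paths_permutations (s : List ℕ) (hs : ∀ x ∈ s, 2 ≤ x) (k : ℕ) (hk : 1 ≤ k) :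
    Nat.card {μ : List ℕ // IsDyck s μ ∧ peaks μ = k} =
      Nat.card {w : List ℕ // IsSPerm (s.map (fun x => x - 1)) w ∧ Avoids212 w ∧
        Avoids312 w ∧ ascents w = k - 1} := by
  exact narayana_paths_permutations' s hs k hk
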